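/- Let {F_m} be a sequence of functions with F_m ∈ Ω_m, F_0(x) = b_{0,0}⁰ ≠ 0, and F_m(x) = Σ_j b_{m,2j}⁰ x^{m-2j} + √(1-x²) Σ_j b_{m,2j}¹ x^{m-1-2j}, such that b_{m+1,0}⁰ b_{m,0}⁰ + b_{m+1,0}¹ b_{m,0}¹ ≠ 0 for all m ≥ 0 (with b_{0,0}¹ = 0). Then the set {F_{2m}(x), √(1-x²) F_{2m-1}(x), F_{2m-2}(x), ..., F_2(x), √(1-x²) F_1(x), F_0(x)} is a basis of Ω_{2m}. -/

import Mathlib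

open Polynomial Real

/-- The space `Ω_m` of functions on `[-1,1]`, as a set of functions. -/
def OmegaSet (m : ℕ) : Set (Set.Icc (-1 : ℝ) 1 → ℝ) :=
  {f | ∃ B0 B1 : Polynomial ℝ,
    B0.degree ≤ (m : ℕ) ∧ B1.degree < (m : ℕ) ∧
    (∀ t : ℝ, B0.eval (-t) = (-1 : ℝ) ^ m * B0.eval t) ∧
    (∀ t : ℝ, B1.eval (-t) = (-1 : ℝ) ^ (m + 1) * B1.eval t) ∧
    ∀ t : Set.Icc (-1 : ℝ) 1,
      f t = B0.eval (t : ℝ) + Real.sqrt (1 - (t : ℝ) ^ 2) * B1.eval (t : ℝ)}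


noncomputable def Ppoly (b0 : ℕ → ℕ → ℝ) (n : ℕ) : Polynomial ℝ :=
  ∑ j ∈ Finset.range (n / 2 + 1), Polynomial.monomial (n - 2 * j) (b0 n (2 * j))

noncomputable def Qpoly (b1 : ℕ → ℕ → ℝ) (n : ℕ) : Polynomial ℝ :=
  ∑ j ∈ Finset.range ((n - 1) / 2 + 1), Polynomial.monomial (n - 1 - 2 * j) (b1 n (2 * j))

noncomputable def qpair (b0 b1 : ℕ → ℕ → ℝ) (n : ℕ) : Polynomial ℝ × Polynomial ℝ :=
  if Even n then (Ppoly b0 n, Qpoly b1 n)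
  else ((1 - Polynomial.X ^ 2) * Qpoly b1 n, Ppoly b0 n)

section coeffs
variable (b0 b1 : ℕ → ℕ → ℝ)

lemma P_coeff_zero {n d : ℕ} (h : ∀ j, j ≤ n / 2 → n - 2 * j ≠ d) :
    (Ppoly b0 n).coeff d = 0 := by
  rw [Ppoly, Polynomial.finset_sum_coeff]
  refine Finset.sum_eq_zero fun j hj => ?_
  rw [Polynomial.coeff_monomial, if_neg (h j (by simpa using Nat.lt_succ_iff.mp (Finset.mem_range.mp hj)))]

lemma P_coeff_gt {n d : ℕ} (h : n < d) : (Ppoly b0 n).coeff d = 0 :=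
  P_coeff_zero b0 (fun j hj => by omega)

lemma P_coeff_parity {n d : ℕ} (h : d % 2 ≠ n % 2) : (Ppoly b0 n).coeff d = 0 :=
  P_coeff_zero b0 (fun j hj => by omega)

lemma P_coeff_self (n : ℕ) : (Ppoly b0 n).coeff n = b0 n 0 := by
  rw [Ppoly, Polynomial.finset_sum_coeff]
  rw [Finset.sum_eq_single_of_mem 0 (Finset.mem_range.mpr (by omega))]
  · simp [Polynomial.coeff_monomial]
  · intro j hj hj0
    rw [Polynomial.coeff_monomial, if_neg]
    have := Nat.lt_succ_iff.mp (Finset.mem_range.mp hj)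
    omega

lemma Q_coeff_zero {n d : ℕ} (h : ∀ j, j ≤ (n - 1) / 2 → n - 1 - 2 * j ≠ d) :
    (Qpoly b1 n).coeff d = 0 := by
  rw [Qpoly, Polynomial.finset_sum_coeff]
  refine Finset.sum_eq_zero fun j hj => ?_
  rw [Polynomial.coeff_monomial, if_neg (h j (by simpa using Nat.lt_succ_iff.mp (Finset.mem_range.mp hj)))]

lemma Q_coeff_gt {n d : ℕ} (h : n - 1 < d) : (Qpoly b1 n).coeff d = 0 :=
  Q_coeff_zero b1 (fun j hj => by omega)

lemma Q_coeff_parity {n d : ℕ} (hn : 1 ≤ n) (h : d % 2 = n % 2) : (Qpoly b1 n).coeff d = 0 :=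
  Q_coeff_zero b1 (fun j hj => by omega)

lemma Q_coeff_self {n d : ℕ} (hn : n = d + 1) : (Qpoly b1 n).coeff d = b1 n 0 := by
  rw [Qpoly, Polynomial.finset_sum_coeff]
  rw [Finset.sum_eq_single_of_mem 0 (Finset.mem_range.mpr (by omega))]
  · rw [Polynomial.coeff_monomial, if_pos (by omega)]
  · intro j hj hj0
    rw [Polynomial.coeff_monomial, if_neg]
    have := Nat.lt_succ_iff.mp (Finset.mem_range.mp hj)
    omega

lemma one_sub_X_sq_mul_coeff (A : Polynomial ℝ) (d : ℕ) :
    ((1 - Polynomial.X ^ 2) * A).coeff d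
      = A.coeff d - if 2 ≤ d then A.coeff (d - 2) else 0 := by
  have h : (1 - Polynomial.X ^ 2) * A = A - A * Polynomial.X ^ 2 := by ring
  rw [h, Polynomial.coeff_sub, Polynomial.coeff_mul_X_pow']

end coeffs

lemma neg1pow (d : ℕ) : ((-1:ℝ))^d = if d % 2 = 0 then 1 else -1 := by
  rcases Nat.even_or_odd d with h | h
  · simp [h.neg_one_pow, Nat.even_iff.mp h]
  · have := Nat.odd_iff.mp h
    rw [h.neg_one_pow, if_neg (by omega)]

lemma neg1pow_ne_one_iff (d : ℕ) : ((-1:ℝ))^d ≠ 1 ↔ d % 2 = 1 := by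
  rw [neg1pow]; split <;> norm_num <;> omega

lemma neg1pow_ne_negone_iff (d : ℕ) : ((-1:ℝ))^d ≠ -1 ↔ d % 2 = 0 := by
  rw [neg1pow]; split <;> norm_num <;> omega

lemma coeff_eq_zero_of_eval_parity (p : Polynomial ℝ) (ε : ℝ)
    (h : ∀ t : ℝ, p.eval (-t) = ε * p.eval t) (d : ℕ) (hd : (-1:ℝ)^d ≠ ε) :
    p.coeff d = 0 := by
  by_cases hdn : d ≤ p.natDegree
  · set q : Polynomial ℝ := ∑ i ∈ Finset.range (p.natDegree + 1),
      Polynomial.monomial i ((-1:ℝ)^i * p.coeff i) with hqdef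
    have hq : ∀ t : ℝ, q.eval t = p.eval (-t) := by
      intro t
      rw [hqdef, Polynomial.eval_finset_sum, Polynomial.eval_eq_sum_range (-t)]
      refine Finset.sum_congr rfl fun i _ => ?_
      rw [Polynomial.eval_monomial, neg_pow]
      ring
    have hq2 : q = Polynomial.C ε * p :=
      Polynomial.funext fun t => by rw [hq, h, Polynomial.eval_mul, Polynomial.eval_C]
    have h1 : q.coeff d = (-1:ℝ)^d * p.coeff d := by
      rw [hqdef, Polynomial.finset_sum_coeff]
      rw [Finset.sum_eq_single_of_mem d (Finset.mem_range.mpr (by omega))]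
      · simp [Polynomial.coeff_monomial]
      · intro i _ hi
        rw [Polynomial.coeff_monomial, if_neg hi]
    have h2 : q.coeff d = ε * p.coeff d := by rw [hq2, Polynomial.coeff_C_mul]
    have h3 : ((-1:ℝ)^d - ε) * p.coeff d = 0 := by rw [sub_mul, h1.symm.trans h2]; ring
    rcases mul_eq_zero.mp h3 with h4 | h4
    · exact absurd (by linarith [h4] : ((-1:ℝ))^d = ε) hd
    · exact h4
  · exact p.coeff_eq_zero_of_natDegree_lt (by omega)

lemma eval_parity_of_coeff (p : Polynomial ℝ) (ε : ℝ)
    (h : ∀ d, (-1:ℝ)^d ≠ ε → p.coeff d = 0) (t : ℝ) : p.eval (-t) = ε * p.eval t := by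
  rw [Polynomial.eval_eq_sum_range (-t), Polynomial.eval_eq_sum_range t, Finset.mul_sum]
  refine Finset.sum_congr rfl fun i _ => ?_
  by_cases hi : (-1:ℝ)^i = ε
  · rw [neg_pow, hi]; ring
  · rw [h i hi]; ring

lemma pair_inj (B0 B1 : Polynomial ℝ)
    (h0 : ∀ d, d % 2 = 1 → B0.coeff d = 0) (h1 : ∀ d, d % 2 = 0 → B1.coeff d = 0)
    (h : ∀ t : Set.Icc (-1:ℝ) 1, B0.eval (t:ℝ) + Real.sqrt (1 - (t:ℝ)^2) * B1.eval (t:ℝ) = 0) :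
    B0 = 0 ∧ B1 = 0 := by
  have he0 : ∀ t : ℝ, B0.eval (-t) = B0.eval t := fun t => by
    rw [eval_parity_of_coeff B0 1 (fun d hd => h0 d ((neg1pow_ne_one_iff d).mp hd)) t]; ring
  have he1 : ∀ t : ℝ, B1.eval (-t) = - B1.eval t := fun t => by
    rw [eval_parity_of_coeff B1 (-1) (fun d hd => h1 d ((neg1pow_ne_negone_iff d).mp hd)) t]; ring
  have hB0 : B0 = 0 := by
    apply Polynomial.eq_zero_of_infinite_isRoot
    apply (Set.Icc_infinite (by norm_num : (-1:ℝ) < 1)).mono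
    intro x hx
    rw [Set.mem_Icc] at hx
    have h1' := h ⟨x, Set.mem_Icc.mpr hx⟩
    have h2' := h ⟨-x, Set.mem_Icc.mpr ⟨by linarith [hx.2], by linarith [hx.1]⟩⟩
    simp only [Set.mem_setOf_eq, IsRoot]
    dsimp only at h1' h2'
    rw [he0, he1, neg_sq] at h2'
    linarith [h1', h2']
  refine ⟨hB0, ?_⟩
  apply Polynomial.eq_zero_of_infinite_isRoot
  apply (Set.Icc_infinite (by norm_num : (-(1:ℝ)/2) < 1/2)).mono
  intro x hx
  rw [Set.mem_Icc] at hx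
  have hx' : x ∈ Set.Icc (-1:ℝ) 1 := Set.mem_Icc.mpr ⟨by linarith [hx.1], by linarith [hx.2]⟩
  have h1' := h ⟨x, hx'⟩
  dsimp only at h1'
  rw [hB0] at h1'
  simp only [Polynomial.eval_zero, zero_add] at h1'
  have hs : Real.sqrt (1 - x^2) ≠ 0 :=
    ne_of_gt (Real.sqrt_pos.mpr (by nlinarith [hx.1, hx.2]))
  simp only [Set.mem_setOf_eq, IsRoot]
  exact (mul_eq_zero.mp h1').resolve_left hs
lemma indep_aux (b0 b1 : ℕ → ℕ → ℝ) (h000 : b0 0 0 ≠ 0)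
    (hlead : ∀ k : ℕ, b0 (k + 1) 0 * b0 k 0 + b1 (k + 1) 0 * b1 k 0 ≠ 0) :
    ∀ M : ℕ, ∀ c : ℕ → ℝ, (∑ n ∈ Finset.range (2*M+1), c n • qpair b0 b1 n) = 0 →
      ∀ n ≤ 2*M, c n = 0 := by
  intro M
  induction M with
  | zero =>
    intro c hc n hn
    interval_cases n
    rw [Finset.sum_range_one] at hc
    have h1 := congrArg (fun p : Polynomial ℝ × Polynomial ℝ => p.1.coeff 0) hc
    simp only [Prod.smul_fst, Polynomial.coeff_smul, smul_eq_mul, Prod.fst_zero,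
      Polynomial.coeff_zero] at h1
    rw [qpair, if_pos Even.zero] at h1
    dsimp only at h1
    rw [P_coeff_self] at h1
    exact (mul_eq_zero.mp h1).resolve_right h000
  | succ M ih =>
    intro c hc
    have e : 2*(M+1)+1 = (2*M+1)+1+1 := by omega
    rw [e, Finset.sum_range_succ, Finset.sum_range_succ] at hc
    have hodd1 : ¬ Even (2*M+1) := by rintro ⟨r, hr⟩; omega
    have heven2 : Even (2*M+1+1) := ⟨M+1, by omega⟩
    -- first components at degree 2*M+2
    have h1 := congrArg (fun p : Polynomial ℝ × Polynomial ℝ => p.1.coeff (2*M+2)) hc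
    simp only [Prod.fst_add, Polynomial.coeff_add, Prod.fst_zero, Polynomial.coeff_zero,
      Prod.smul_fst, Polynomial.coeff_smul, smul_eq_mul] at h1
    rw [Prod.fst_sum, Polynomial.finset_sum_coeff] at h1
    rw [Finset.sum_eq_zero] at h1
    swap
    · intro n hn
      rw [Finset.mem_range] at hn
      rw [Prod.smul_fst, Polynomial.coeff_smul, smul_eq_mul]
      rcases Nat.even_or_odd n with he | ho
      · rw [qpair, if_pos he]
        dsimp only
        rw [P_coeff_gt b0 (by omega)]
        ring
      · have hno := Nat.odd_iff.mp ho
        rw [qpair, if_neg (by rw [Nat.even_iff]; omega)]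
        dsimp only
        rw [one_sub_X_sq_mul_coeff, Q_coeff_gt b1 (by omega), if_pos (by omega),
          Q_coeff_gt b1 (by omega)]
        ring
    rw [qpair, if_neg hodd1, qpair, if_pos heven2] at h1
    dsimp only at h1
    rw [one_sub_X_sq_mul_coeff, Q_coeff_gt b1 (by omega), if_pos (by omega),
      Q_coeff_self b1 (by omega)] at h1
    rw [show (2*M+1+1 : ℕ) = 2*M+2 from by omega, P_coeff_self] at h1
    -- second components at degree 2*M+1
    have h2 := congrArg (fun p : Polynomial ℝ × Polynomial ℝ => p.2.coeff (2*M+1)) hc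
    simp only [Prod.snd_add, Polynomial.coeff_add, Prod.snd_zero, Polynomial.coeff_zero,
      Prod.smul_snd, Polynomial.coeff_smul, smul_eq_mul] at h2
    rw [Prod.snd_sum, Polynomial.finset_sum_coeff] at h2
    rw [Finset.sum_eq_zero] at h2
    swap
    · intro n hn
      rw [Finset.mem_range] at hn
      rw [Prod.smul_snd, Polynomial.coeff_smul, smul_eq_mul]
      rcases Nat.even_or_odd n with he | ho
      · rw [qpair, if_pos he]
        dsimp only
        rw [Q_coeff_gt b1 (by omega)]
        ring
      · have hno := Nat.odd_iff.mp ho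
        rw [qpair, if_neg (by rw [Nat.even_iff]; omega)]
        dsimp only
        rw [P_coeff_gt b0 (by omega)]
        ring
    rw [qpair, if_neg hodd1, qpair, if_pos heven2] at h2
    dsimp only at h2
    rw [P_coeff_self] at h2
    rw [show (2*M+1+1 : ℕ) = 2*M+2 from by omega, Q_coeff_self b1 (by omega)] at h2
    -- solve the 2x2 system
    have hΔ : b0 (2*M+2) 0 * b0 (2*M+1) 0 + b1 (2*M+2) 0 * b1 (2*M+1) 0 ≠ 0 := by
      have := hlead (2*M+1)
      rwa [show (2*M+1+1 : ℕ) = 2*M+2 from by omega] at this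
    have hc2 : c (2*M+2) = 0 := by
      have hh : c (2*M+2) * (b0 (2*M+2) 0 * b0 (2*M+1) 0 + b1 (2*M+2) 0 * b1 (2*M+1) 0) = 0 := by
        linear_combination h1 * b0 (2*M+1) 0 + h2 * b1 (2*M+1) 0
      exact (mul_eq_zero.mp hh).resolve_right hΔ
    have hc1 : c (2*M+1) = 0 := by
      have hh : c (2*M+1) * (b0 (2*M+2) 0 * b0 (2*M+1) 0 + b1 (2*M+2) 0 * b1 (2*M+1) 0) = 0 := by
        linear_combination h2 * b0 (2*M+2) 0 - h1 * b1 (2*M+2) 0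
      exact (mul_eq_zero.mp hh).resolve_right hΔ
    rw [show (2*M+1+1 : ℕ) = 2*M+2 from by omega, hc1, hc2, zero_smul, zero_smul, add_zero,
      add_zero] at hc
    intro n hn
    rcases Nat.lt_or_ge n (2*M+1) with h | h
    · exact ih c hc n (by omega)
    · have : n = 2*M+1 ∨ n = 2*M+2 := by omega
      rcases this with rfl | rfl
      · exact hc1
      · exact hc2
lemma span_aux (b0 b1 : ℕ → ℕ → ℝ) (h000 : b0 0 0 ≠ 0) (hb100 : b1 0 0 = 0)
    (hlead : ∀ k : ℕ, b0 (k + 1) 0 * b0 k 0 + b1 (k + 1) 0 * b1 k 0 ≠ 0) :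
    ∀ M : ℕ, ∀ B0 B1 : Polynomial ℝ,
      (∀ d, 2*M < d → B0.coeff d = 0) → (∀ d, 2*M ≤ d → B1.coeff d = 0) →
      (∀ d, d % 2 = 1 → B0.coeff d = 0) → (∀ d, d % 2 = 0 → B1.coeff d = 0) →
      (B0, B1) ∈ Submodule.span ℝ (qpair b0 b1 '' Set.Iic (2*M)) := by
  intro M
  induction M with
  | zero =>
    intro B0 B1 hd0 hd1 hp0 hp1
    have hB1 : B1 = 0 := Polynomial.ext fun d => by rw [hd1 d (by omega)]; simp
    have hB0 : B0 = Polynomial.C (B0.coeff 0) := Polynomial.ext fun d => by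
      rcases Nat.eq_zero_or_pos d with h | h
      · subst h; simp
      · rw [hd0 d (by omega), Polynomial.coeff_C, if_neg (by omega)]
    have hq0 : qpair b0 b1 0 = (Polynomial.C (b0 0 0), 0) := by
      rw [qpair, if_pos Even.zero, Ppoly, Qpoly]
      simp [hb100]
    have hrep : (B0, B1) = (B0.coeff 0 / b0 0 0) • qpair b0 b1 0 := by
      rw [hq0, Prod.smul_mk, smul_zero, Polynomial.smul_C,
        smul_eq_mul, div_mul_cancel₀ _ h000, ← hB0, ← hB1]
    rw [hrep]
    exact Submodule.smul_mem _ _ (Submodule.subset_span ⟨0, Set.mem_Iic.mpr (by omega), rfl⟩)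
  | succ M ih =>
    intro B0 B1 hd0 hd1 hp0 hp1
    have hΔ : b0 (2*M+2) 0 * b0 (2*M+1) 0 + b1 (2*M+2) 0 * b1 (2*M+1) 0 ≠ 0 := by
      have := hlead (2*M+1)
      rwa [show (2*M+1+1 : ℕ) = 2*M+2 from by omega] at this
    set α := B0.coeff (2*M+2) with hα
    set β := B1.coeff (2*M+1) with hβ
    set Δ := b0 (2*M+2) 0 * b0 (2*M+1) 0 + b1 (2*M+2) 0 * b1 (2*M+1) 0 with hΔdef
    set c0 := (α * b0 (2*M+1) 0 + β * b1 (2*M+1) 0) / Δ with hc0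
    set c1 := (β * b0 (2*M+2) 0 - α * b1 (2*M+2) 0) / Δ with hc1
    have e1 : c0 * b0 (2*M+2) 0 - c0 * 0 - c1 * b1 (2*M+1) 0 = α := by
      rw [hc0, hc1]
      field_simp
      ring
    have e2 : c0 * b1 (2*M+2) 0 + c1 * b0 (2*M+1) 0 = β := by
      rw [hc0, hc1]
      field_simp
      ring
    set B0' := B0 - c0 • Ppoly b0 (2*M+2) - c1 • ((1 - Polynomial.X^2) * Qpoly b1 (2*M+1))
      with hB0'
    set B1' := B1 - c0 • Qpoly b1 (2*M+2) - c1 • Ppoly b0 (2*M+1) with hB1'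
    have hp0' : ∀ d, d % 2 = 1 → B0'.coeff d = 0 := by
      intro d hd
      rw [hB0', Polynomial.coeff_sub, Polynomial.coeff_sub, Polynomial.coeff_smul,
        Polynomial.coeff_smul, smul_eq_mul, smul_eq_mul, hp0 d hd,
        P_coeff_parity b0 (by omega), one_sub_X_sq_mul_coeff,
        Q_coeff_parity b1 (by omega) (by omega)]
      have hif : (if 2 ≤ d then (Qpoly b1 (2*M+1)).coeff (d-2) else 0) = 0 := by
        split
        · exact Q_coeff_parity b1 (by omega) (by omega)
        · rfl
      rw [hif]; ring
    have hp1' : ∀ d, d % 2 = 0 → B1'.coeff d = 0 := by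
      intro d hd
      rw [hB1', Polynomial.coeff_sub, Polynomial.coeff_sub, Polynomial.coeff_smul,
        Polynomial.coeff_smul, smul_eq_mul, smul_eq_mul, hp1 d hd,
        Q_coeff_parity b1 (by omega) (by omega), P_coeff_parity b0 (by omega)]
      ring
    have hd0' : ∀ d, 2*M < d → B0'.coeff d = 0 := by
      intro d hd
      rcases Nat.lt_or_ge (2*M+2) d with h | h
      · rw [hB0', Polynomial.coeff_sub, Polynomial.coeff_sub, Polynomial.coeff_smul,
          Polynomial.coeff_smul, smul_eq_mul, smul_eq_mul, hd0 d (by omega),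
          P_coeff_gt b0 (by omega), one_sub_X_sq_mul_coeff, Q_coeff_gt b1 (by omega)]
        have hif : (if 2 ≤ d then (Qpoly b1 (2*M+1)).coeff (d-2) else 0) = 0 := by
          split
          · exact Q_coeff_gt b1 (by omega)
          · rfl
        rw [hif]; ring
      · have : d = 2*M+1 ∨ d = 2*M+2 := by omega
        rcases this with rfl | rfl
        · exact hp0' _ (by omega)
        · rw [hB0', Polynomial.coeff_sub, Polynomial.coeff_sub, Polynomial.coeff_smul,
            Polynomial.coeff_smul, smul_eq_mul, smul_eq_mul, ← hα,
            P_coeff_self, one_sub_X_sq_mul_coeff, Q_coeff_gt b1 (by omega), if_pos (by omega),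
            Q_coeff_self b1 (by omega)]
          linear_combination -e1
    have hd1' : ∀ d, 2*M ≤ d → B1'.coeff d = 0 := by
      intro d hd
      rcases Nat.lt_or_ge (2*M+1) d with h | h
      · rw [hB1', Polynomial.coeff_sub, Polynomial.coeff_sub, Polynomial.coeff_smul,
          Polynomial.coeff_smul, smul_eq_mul, smul_eq_mul, hd1 d (by omega),
          Q_coeff_gt b1 (by omega), P_coeff_gt b0 (by omega)]
        ring
      · have : d = 2*M ∨ d = 2*M+1 := by omega
        rcases this with rfl | rfl
        · exact hp1' _ (by omega)
        · rw [hB1', Polynomial.coeff_sub, Polynomial.coeff_sub, Polynomial.coeff_smul,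
            Polynomial.coeff_smul, smul_eq_mul, smul_eq_mul, ← hβ,
            Q_coeff_self b1 (by omega), P_coeff_self]
          linear_combination -e2
    have hmem : (B0', B1') ∈ Submodule.span ℝ (qpair b0 b1 '' Set.Iic (2*(M+1))) :=
      Submodule.span_mono
        (Set.image_mono (Set.Iic_subset_Iic.mpr (by omega)))
        (ih B0' B1' hd0' hd1' hp0' hp1')
    have hq2 : qpair b0 b1 (2*M+2) = (Ppoly b0 (2*M+2), Qpoly b1 (2*M+2)) := by
      rw [qpair, if_pos ⟨M+1, by omega⟩]
    have hq1 : qpair b0 b1 (2*M+1)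
        = ((1 - Polynomial.X^2) * Qpoly b1 (2*M+1), Ppoly b0 (2*M+1)) := by
      rw [qpair, if_neg (by rintro ⟨r, hr⟩; omega)]
    have heq : (B0, B1) = (B0', B1') + c0 • qpair b0 b1 (2*M+2) + c1 • qpair b0 b1 (2*M+1) := by
      rw [hq1, hq2, hB0', hB1', Prod.smul_mk, Prod.smul_mk, Prod.mk_add_mk, Prod.mk_add_mk]
      rw [Prod.mk.injEq]
      constructor <;> module
    rw [heq]
    refine Submodule.add_mem _ (Submodule.add_mem _ hmem ?_) ?_
    · exact Submodule.smul_mem _ _ (Submodule.subset_span ⟨2*M+2, Set.mem_Iic.mpr (by omega), rfl⟩)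
    · exact Submodule.smul_mem _ _ (Submodule.subset_span ⟨2*M+1, Set.mem_Iic.mpr (by omega), rfl⟩)
noncomputable def Phi : (Polynomial ℝ × Polynomial ℝ) →ₗ[ℝ] (Set.Icc (-1:ℝ) 1 → ℝ) where
  toFun p := fun t => p.1.eval (t:ℝ) + Real.sqrt (1 - (t:ℝ)^2) * p.2.eval (t:ℝ)
  map_add' p q := by
    funext t
    simp only [Prod.fst_add, Prod.snd_add, Polynomial.eval_add, Pi.add_apply]
    ring
  map_smul' c p := by
    funext t
    simp only [Prod.smul_fst, Prod.smul_snd, Polynomial.eval_smul, smul_eq_mul,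
      Pi.smul_apply, RingHom.id_apply]
    ring

lemma Phi_apply (p : Polynomial ℝ × Polynomial ℝ) (t : Set.Icc (-1:ℝ) 1) :
    Phi p t = p.1.eval (t:ℝ) + Real.sqrt (1 - (t:ℝ)^2) * p.2.eval (t:ℝ) := rfl

lemma Qpoly_zero (b1 : ℕ → ℕ → ℝ) (hb100 : b1 0 0 = 0) : Qpoly b1 0 = 0 := by
  simp [Qpoly, hb100]

section qlem
variable (b0 b1 : ℕ → ℕ → ℝ)

lemma qpair_fst_parity (n d : ℕ) (hd : d % 2 = 1) : (qpair b0 b1 n).1.coeff d = 0 := by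
  rcases Nat.even_or_odd n with he | ho
  · have hne := Nat.even_iff.mp he
    rw [qpair, if_pos he]
    exact P_coeff_parity b0 (by omega)
  · have hno := Nat.odd_iff.mp ho
    rw [qpair, if_neg (by rw [Nat.even_iff]; omega)]
    dsimp only
    rw [one_sub_X_sq_mul_coeff, Q_coeff_parity b1 (by omega) (by omega)]
    have hif : (if 2 ≤ d then (Qpoly b1 n).coeff (d-2) else 0) = 0 := by
      split
      · exact Q_coeff_parity b1 (by omega) (by omega)
      · rfl
    rw [hif]; ring

lemma qpair_snd_parity (hb100 : b1 0 0 = 0) (n d : ℕ) (hd : d % 2 = 0) :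
    (qpair b0 b1 n).2.coeff d = 0 := by
  rcases Nat.even_or_odd n with he | ho
  · have hne := Nat.even_iff.mp he
    rw [qpair, if_pos he]
    dsimp only
    rcases Nat.eq_zero_or_pos n with h0 | h0
    · subst h0; rw [Qpoly_zero b1 hb100]; simp
    · exact Q_coeff_parity b1 (by omega) (by omega)
  · have hno := Nat.odd_iff.mp ho
    rw [qpair, if_neg (by rw [Nat.even_iff]; omega)]
    exact P_coeff_parity b0 (by omega)

lemma qpair_fst_gt {n mm d : ℕ} (hn : n ≤ 2*mm) (hd : 2*mm < d) :
    (qpair b0 b1 n).1.coeff d = 0 := by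
  rcases Nat.even_or_odd n with he | ho
  · rw [qpair, if_pos he]
    exact P_coeff_gt b0 (by omega)
  · have hno := Nat.odd_iff.mp ho
    rw [qpair, if_neg (by rw [Nat.even_iff]; omega)]
    dsimp only
    rw [one_sub_X_sq_mul_coeff, Q_coeff_gt b1 (by omega)]
    have hif : (if 2 ≤ d then (Qpoly b1 n).coeff (d-2) else 0) = 0 := by
      split
      · exact Q_coeff_gt b1 (by omega)
      · rfl
    rw [hif]; ring

lemma qpair_snd_ge (hb100 : b1 0 0 = 0) {n mm d : ℕ} (hn : n ≤ 2*mm) (hd : 2*mm ≤ d) :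
    (qpair b0 b1 n).2.coeff d = 0 := by
  rcases Nat.even_or_odd n with he | ho
  · rw [qpair, if_pos he]
    dsimp only
    rcases Nat.eq_zero_or_pos n with h0 | h0
    · subst h0; rw [Qpoly_zero b1 hb100]; simp
    · exact Q_coeff_gt b1 (by omega)
  · have hno := Nat.odd_iff.mp ho
    rw [qpair, if_neg (by rw [Nat.even_iff]; omega)]
    exact P_coeff_gt b0 (by omega)

end qlem

noncomputable def OmegaSub (m : ℕ) : Submodule ℝ (Set.Icc (-1:ℝ) 1 → ℝ) where
  carrier := OmegaSet m
  zero_mem' := by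
    refine ⟨0, 0, ?_, ?_, ?_, ?_, ?_⟩
    · rw [Polynomial.degree_zero]; exact bot_le
    · rw [Polynomial.degree_zero]; exact WithBot.bot_lt_coe _
    · intro t; simp
    · intro t; simp
    · intro t; simp
  add_mem' := by
    rintro f g ⟨Bf0, Bf1, hf0, hf1, hfp0, hfp1, hfe⟩ ⟨Bg0, Bg1, hg0, hg1, hgp0, hgp1, hge⟩
    refine ⟨Bf0 + Bg0, Bf1 + Bg1, ?_, ?_, ?_, ?_, ?_⟩
    · exact le_trans (Polynomial.degree_add_le _ _) (max_le hf0 hg0)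
    · exact lt_of_le_of_lt (Polynomial.degree_add_le _ _) (max_lt hf1 hg1)
    · intro t; simp only [Polynomial.eval_add, hfp0 t, hgp0 t]; ring
    · intro t; simp only [Polynomial.eval_add, hfp1 t, hgp1 t]; ring
    · intro t
      simp only [Pi.add_apply, Polynomial.eval_add, hfe t, hge t]
      ring
  smul_mem' := by
    rintro c f ⟨B0, B1, h0, h1, hp0, hp1, he⟩
    refine ⟨c • B0, c • B1, ?_, ?_, ?_, ?_, ?_⟩
    · exact le_trans (Polynomial.degree_smul_le _ _) h0
    · exact lt_of_le_of_lt (Polynomial.degree_smul_le _ _) h1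
    · intro t; simp only [Polynomial.eval_smul, smul_eq_mul, hp0 t]; ring
    · intro t; simp only [Polynomial.eval_smul, smul_eq_mul, hp1 t]; ring
    · intro t
      simp only [Pi.smul_apply, Polynomial.eval_smul, smul_eq_mul, he t]
      ring

lemma neg1pow_two_mul (m : ℕ) : ((-1:ℝ))^(2*m) = 1 := by
  rw [pow_mul]; norm_num

lemma neg1pow_two_mul_add_one (m : ℕ) : ((-1:ℝ))^(2*m+1) = -1 := by
  rw [pow_succ, neg1pow_two_mul]; norm_num

/-- If `F_m ∈ Ω_m` with `F_m(x) = Σ_j b⁰_{m,2j} x^{m-2j} +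
√(1-x²) Σ_j b¹_{m,2j} x^{m-1-2j}`, and
`b⁰_{m+1,0} b⁰_{m,0} + b¹_{m+1,0} b¹_{m,0} ≠ 0` for all `m ≥ 0`, then
`{F_{2m}, √(1-x²) F_{2m-1}, F_{2m-2}, …, F_2, √(1-x²) F_1, F_0}` is a basis of `Ω_{2m}`. -/
theorem stmt_10 (m : ℕ) (b0 b1 : ℕ → ℕ → ℝ) (F : ℕ → (Set.Icc (-1 : ℝ) 1 → ℝ))
    (hb100 : b1 0 0 = 0)
    (hF : ∀ k : ℕ, ∀ t : Set.Icc (-1 : ℝ) 1,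
      F k t = (∑ j ∈ Finset.range (k / 2 + 1), b0 k (2 * j) * (t : ℝ) ^ (k - 2 * j)) +
        Real.sqrt (1 - (t : ℝ) ^ 2) *
          ∑ j ∈ Finset.range ((k - 1) / 2 + 1), b1 k (2 * j) * (t : ℝ) ^ (k - 1 - 2 * j))
    (hlead : ∀ k : ℕ, b0 (k + 1) 0 * b0 k 0 + b1 (k + 1) 0 * b1 k 0 ≠ 0)
    (g : Fin (2 * m + 1) → (Set.Icc (-1 : ℝ) 1 → ℝ))
    (hg : ∀ k : Fin (2 * m + 1), ∀ t : Set.Icc (-1 : ℝ) 1,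
      g k t = (if Even (k : ℕ) then 1 else Real.sqrt (1 - (t : ℝ) ^ 2)) *
        F (2 * m - (k : ℕ)) t) :
    LinearIndependent ℝ g ∧
      (Submodule.span ℝ (Set.range g) : Set (Set.Icc (-1 : ℝ) 1 → ℝ)) = OmegaSet (2 * m) := by
  have h000 : b0 0 0 ≠ 0 := by
    have h := hlead 0
    rw [hb100, mul_zero, add_zero] at h
    exact fun hz => h (by rw [hz, mul_zero])
  have hFP : ∀ n : ℕ, ∀ t : Set.Icc (-1:ℝ) 1,
      F n t = (Ppoly b0 n).eval (t:ℝ)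
        + Real.sqrt (1 - (t:ℝ)^2) * (Qpoly b1 n).eval (t:ℝ) := by
    intro n t
    rw [hF n t, Ppoly, Qpoly, Polynomial.eval_finset_sum, Polynomial.eval_finset_sum]
    simp only [Polynomial.eval_monomial]
  have hsq : ∀ t : Set.Icc (-1:ℝ) 1,
      Real.sqrt (1 - (t:ℝ)^2) * Real.sqrt (1 - (t:ℝ)^2) = 1 - (t:ℝ)^2 := by
    intro t
    have ht := t.2
    rw [Set.mem_Icc] at ht
    exact Real.mul_self_sqrt (by nlinarith [ht.1, ht.2])
  have hgq : ∀ k : Fin (2*m+1), g k = Phi (qpair b0 b1 (2*m - (k:ℕ))) := by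
    intro k
    have hk : (k:ℕ) ≤ 2*m := Nat.lt_succ_iff.mp k.isLt
    funext t
    rw [hg k t, hFP]
    by_cases hke : Even (k:ℕ)
    · have hkem := Nat.even_iff.mp hke
      have hne : Even (2*m - (k:ℕ)) := by rw [Nat.even_iff]; omega
      rw [if_pos hke, Phi_apply, qpair, if_pos hne]
      ring
    · have hkom := Nat.not_even_iff.mp hke
      have hno : ¬ Even (2*m - (k:ℕ)) := by rw [Nat.even_iff]; omega
      rw [if_neg hke, Phi_apply, qpair, if_neg hno]
      dsimp only
      simp only [Polynomial.eval_mul, Polynomial.eval_sub, Polynomial.eval_one,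
        Polynomial.eval_pow, Polynomial.eval_X]
      linear_combination (Polynomial.eval (t:ℝ) (Qpoly b1 (2*m - (k:ℕ)))) * hsq t
  constructor
  · -- linear independence
    rw [Fintype.linearIndependent_iff]
    intro c hc k
    have hk : (k:ℕ) ≤ 2*m := Nat.lt_succ_iff.mp k.isLt
    set c' : ℕ → ℝ := fun n => c ⟨2*m - n, Nat.lt_succ_of_le (Nat.sub_le _ _)⟩ with hc'
    set S : Polynomial ℝ × Polynomial ℝ := ∑ n ∈ Finset.range (2*m+1), c' n • qpair b0 b1 n
      with hS
    have step1 : ∀ i : Fin (2*m+1), c i • qpair b0 b1 (2*m - (i:ℕ))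
        = c' (2*m - (i:ℕ)) • qpair b0 b1 (2*m - (i:ℕ)) := by
      intro i
      have h2 : i = (⟨2*m - (2*m - (i:ℕ)), Nat.lt_succ_of_le (Nat.sub_le _ _)⟩
          : Fin (2*m+1)) :=
        Fin.ext (by
          have hi := Nat.lt_succ_iff.mp i.isLt
          show (i:ℕ) = 2*m - (2*m - (i:ℕ))
          omega)
      exact congrArg (fun z : Fin (2*m+1) => c z • qpair b0 b1 (2*m - (i:ℕ))) h2
    have hsum : ∑ i : Fin (2*m+1), c i • qpair b0 b1 (2*m - (i:ℕ)) = S := by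
      calc ∑ i : Fin (2*m+1), c i • qpair b0 b1 (2*m - (i:ℕ))
          = ∑ j ∈ Finset.range (2*m+1), c' (2*m - j) • qpair b0 b1 (2*m - j) := by
            rw [← Fin.sum_univ_eq_sum_range
              (fun j => c' (2*m - j) • qpair b0 b1 (2*m - j)) (2*m+1)]
            exact Finset.sum_congr rfl fun i _ => step1 i
        _ = S := by
            rw [hS]
            have hrefl := Finset.sum_range_reflect (fun j => c' j • qpair b0 b1 j) (2*m+1)
            simp only [Nat.add_sub_cancel] at hrefl
            exact hrefl
    have hPhiS : Phi S = 0 := by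
      rw [← hsum, map_sum]
      simp only [map_smul]
      rw [← hc]
      refine Finset.sum_congr rfl fun i _ => ?_
      rw [hgq i]
    have hS1 : ∀ d, d % 2 = 1 → S.1.coeff d = 0 := by
      intro d hd
      rw [hS, Prod.fst_sum, Polynomial.finset_sum_coeff]
      refine Finset.sum_eq_zero fun n _ => ?_
      rw [Prod.smul_fst, Polynomial.coeff_smul, smul_eq_mul,
        qpair_fst_parity b0 b1 n d hd, mul_zero]
    have hS2 : ∀ d, d % 2 = 0 → S.2.coeff d = 0 := by
      intro d hd
      rw [hS, Prod.snd_sum, Polynomial.finset_sum_coeff]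
      refine Finset.sum_eq_zero fun n _ => ?_
      rw [Prod.smul_snd, Polynomial.coeff_smul, smul_eq_mul,
        qpair_snd_parity b0 b1 hb100 n d hd, mul_zero]
    have hSz := pair_inj S.1 S.2 hS1 hS2 (fun t => by
      have := congrFun hPhiS t
      rw [Phi_apply] at this
      simpa using this)
    have hSzero : S = 0 := Prod.ext_iff.mpr ⟨hSz.1, hSz.2⟩
    have hall := indep_aux b0 b1 h000 hlead m c' (hS.symm.trans hSzero) (2*m - (k:ℕ)) (by omega)
    rw [hc'] at hall
    dsimp only at hall
    have hkf : (⟨2*m - (2*m - (k:ℕ)), Nat.lt_succ_of_le (Nat.sub_le _ _)⟩ : Fin (2*m+1)) = k :=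
      Fin.ext (by simp only; omega)
    rwa [hkf] at hall
  · -- span equals OmegaSet
    apply Set.Subset.antisymm
    · have hle : Submodule.span ℝ (Set.range g) ≤ OmegaSub (2*m) := by
        rw [Submodule.span_le]
        rintro f ⟨k, rfl⟩
        have hk : (k:ℕ) ≤ 2*m := Nat.lt_succ_iff.mp k.isLt
        show g k ∈ OmegaSet (2*m)
        rw [hgq k]
        refine ⟨(qpair b0 b1 (2*m - (k:ℕ))).1, (qpair b0 b1 (2*m - (k:ℕ))).2, ?_, ?_, ?_, ?_, ?_⟩
        · rw [Polynomial.degree_le_iff_coeff_zero]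
          intro d hd
          exact qpair_fst_gt b0 b1 (Nat.sub_le _ _) (by exact_mod_cast hd)
        · rw [Polynomial.degree_lt_iff_coeff_zero]
          intro d hd
          exact qpair_snd_ge b0 b1 hb100 (Nat.sub_le _ _) hd
        · intro t
          rw [neg1pow_two_mul, one_mul]
          have := eval_parity_of_coeff (qpair b0 b1 (2*m - (k:ℕ))).1 1
            (fun d hd => qpair_fst_parity b0 b1 _ d ((neg1pow_ne_one_iff d).mp hd)) t
          rw [this, one_mul]
        · intro t
          rw [neg1pow_two_mul_add_one]
          exact eval_parity_of_coeff (qpair b0 b1 (2*m - (k:ℕ))).2 (-1)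
            (fun d hd => qpair_snd_parity b0 b1 hb100 _ d ((neg1pow_ne_negone_iff d).mp hd)) t
        · intro t
          rw [Phi_apply]
      exact fun f hf => hle hf
    · intro f hf
      obtain ⟨B0, B1, hdeg0, hdeg1, hpar0, hpar1, heval⟩ := hf
      have hd0 : ∀ d, 2*m < d → B0.coeff d = 0 := fun d hd =>
        Polynomial.coeff_eq_zero_of_degree_lt (lt_of_le_of_lt hdeg0 (by exact_mod_cast hd))
      have hd1 : ∀ d, 2*m ≤ d → B1.coeff d = 0 := fun d hd =>
        Polynomial.coeff_eq_zero_of_degree_lt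
          (lt_of_lt_of_le hdeg1 (by exact_mod_cast hd))
      have hp0 : ∀ d, d % 2 = 1 → B0.coeff d = 0 := fun d hd =>
        coeff_eq_zero_of_eval_parity B0 1
          (fun t => by rw [hpar0 t, neg1pow_two_mul]) d ((neg1pow_ne_one_iff d).mpr hd)
      have hp1 : ∀ d, d % 2 = 0 → B1.coeff d = 0 := fun d hd =>
        coeff_eq_zero_of_eval_parity B1 (-1)
          (fun t => by rw [hpar1 t, neg1pow_two_mul_add_one]) d
          ((neg1pow_ne_negone_iff d).mpr hd)
      have hmem := span_aux b0 b1 h000 hb100 hlead m B0 B1 hd0 hd1 hp0 hp1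
      have hfPhi : f = Phi (B0, B1) := funext fun t => by rw [Phi_apply]; exact heval t
      have hrange : Phi '' (qpair b0 b1 '' Set.Iic (2*m)) = Set.range g := by
        ext x
        constructor
        · rintro ⟨p, ⟨n, hn, rfl⟩, rfl⟩
          rw [Set.mem_Iic] at hn
          refine ⟨⟨2*m - n, Nat.lt_succ_of_le (Nat.sub_le _ _)⟩, ?_⟩
          rw [hgq]
          congr 2
          simp only
          omega
        · rintro ⟨k, rfl⟩
          exact ⟨qpair b0 b1 (2*m - (k:ℕ)),
            ⟨2*m - (k:ℕ), Set.mem_Iic.mpr (Nat.sub_le _ _), rfl⟩, (hgq k).symm⟩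
      have hin : Phi (B0, B1)
          ∈ Submodule.map Phi (Submodule.span ℝ (qpair b0 b1 '' Set.Iic (2*m))) :=
        ⟨(B0, B1), hmem, rfl⟩
      rw [← Submodule.span_image, hrange] at hin
      rw [hfPhi]
      exact hin
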